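/- Let $h$ be submultiplicative ($h(xy)\le h(x)h(y)$) and $f:I\to(0,\infty)$ be $A_tH_h$-convex. Then for all $x_1<x_2<x_3$ in $I$ with $x_2-x_1,x_3-x_2,x_3-x_1$ in the domain of $h$: $h(x_3-x_1)f(x_1)f(x_3)\ge h(x_2-x_1)f(x_1)f(x_2)+h(x_3-x_2)f(x_3)f(x_2)$. -/

import Mathlib

open Real Set

theorem AtHh_three_point_inequality (I : Set ℝ) (hI : I ⊆ Ioi 0)
    (h : ℝ → ℝ) (hpos : ∀ t > (0:ℝ), 0 < h t)
    (hsub : ∀ x > (0:ℝ), ∀ y > (0:ℝ), h (x * y) ≤ h x * h y)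
    (f : ℝ → ℝ) (hfpos : ∀ x ∈ I, 0 < f x)
    (hconv : ∀ a ∈ I, ∀ b ∈ I, ∀ t ∈ Icc (0:ℝ) 1,
      f (t * a + (1 - t) * b) ≤ f a * f b / (h (1 - t) * f a + h t * f b)) :
    ∀ x₁ ∈ I, ∀ x₂ ∈ I, ∀ x₃ ∈ I, x₁ < x₂ → x₂ < x₃ →
      h (x₂ - x₁) * f x₁ * f x₂ + h (x₃ - x₂) * f x₃ * f x₂ ≤
        h (x₃ - x₁) * f x₁ * f x₃ := by
  intro x₁ h₁ x₂ h₂ x₃ h₃ h12 h23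
  have hL : (0:ℝ) < x₃ - x₁ := by linarith
  set t : ℝ := (x₃ - x₂) / (x₃ - x₁) with ht
  have ht0 : 0 < t := div_pos (by linarith) hL
  have ht1 : t < 1 := (div_lt_one hL).2 (by linarith)
  have h1t : 1 - t = (x₂ - x₁) / (x₃ - x₁) := by
    field_simp [ht]
    rw [ht, sub_mul, div_mul_cancel₀ _ hL.ne']; ring
  have h1t0 : 0 < 1 - t := by linarith
  have hx2 : t * x₁ + (1 - t) * x₃ = x₂ := by
    rw [h1t, ht]; field_simp; ring
  have f1 := hfpos x₁ h₁
  have f2 := hfpos x₂ h₂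
  have f3 := hfpos x₃ h₃
  have hht : 0 < h t := hpos t ht0
  have hh1t : 0 < h (1 - t) := hpos _ h1t0
  have hhL : 0 < h (x₃ - x₁) := hpos _ hL
  have hD : 0 < h (1 - t) * f x₁ + h t * f x₃ := by positivity
  have key := hconv x₁ h₁ x₃ h₃ t ⟨le_of_lt ht0, le_of_lt ht1⟩
  rw [hx2, le_div_iff₀ hD] at key
  have e1 : x₂ - x₁ = (1 - t) * (x₃ - x₁) := by
    rw [h1t]; field_simp
  have e2 : x₃ - x₂ = t * (x₃ - x₁) := by
    rw [ht]; field_simp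
  have s1 : h (x₂ - x₁) ≤ h (1 - t) * h (x₃ - x₁) := by
    rw [e1]; exact hsub _ h1t0 _ hL
  have s2 : h (x₃ - x₂) ≤ h t * h (x₃ - x₁) := by
    rw [e2]; exact hsub _ ht0 _ hL
  nlinarith [mul_le_mul_of_nonneg_left key (le_of_lt hhL),
    mul_le_mul_of_nonneg_right s1 (le_of_lt (mul_pos f1 f2)),
    mul_le_mul_of_nonneg_right s2 (le_of_lt (mul_pos f3 f2))]
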